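/- Any 2-cocycle c(i,j) for a q-central extension of the q-Witt algebra which vanishes for i+j ≠ 0 and satisfies c(1,−1) = 0 is determined by Δ(i) := q^i(2)_{q^i} c(i,−i) satisfying the recursion Δ(r) = ((r+1)_q/(r−2)_q) Δ(r−1) for r ≥ 3; hence Δ(i) = ((i+1)_q(i)_q(i−1)_q)/((2)_q(3)_q) Δ(2) for all i ≥ 2. -/

import Mathlib

/-- The q-integer `(n)_q = (1 - q^n)/(1 - q)`, for `n : ℤ`. -/
noncomputable def qInt {K : Type*} [Field K] (q : K) (n : ℤ) : K := (1 - q ^ n) / (1 - q)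

/-- a 2-cocycle for a q-central extension of the q-Witt algebra,
vanishing off `i+j = 0` and normalized by `c(1,−1) = 0`, is determined via
`Δ(i) = q^i (2)_{q^i} c(i,−i)`: with `Δ(1) = 0` and the cocycle relation
`Δ(i+j)(q^{−i} − q^{−j}) = Δ(j)(q^{2i} − q^{−j}) − Δ(i)(q^{2j} − q^{−i})`,
one gets the recursion `Δ(r) = ((r+1)_q/(r−2)_q) Δ(r−1)` for `r ≥ 3`,
and hence `Δ(i) = ((i+1)_q(i)_q(i−1)_q)/((2)_q(3)_q) Δ(2)` for all `i ≥ 2`. -/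
theorem qVirasoro_cocycle_determined {K : Type*} [Field K] (q : K)
    (hq0 : q ≠ 0) (hq1 : q ≠ 1) (hgen : ∀ n : ℤ, n ≠ 0 → qInt q n ≠ 0)
    (Δ : ℤ → K) (hΔ1 : Δ 1 = 0)
    (hcoc : ∀ i j : ℤ,
      Δ (i + j) * (q ^ (-i) - q ^ (-j))
        = Δ j * (q ^ (2 * i) - q ^ (-j)) - Δ i * (q ^ (2 * j) - q ^ (-i))) :
    (∀ r : ℤ, 3 ≤ r → Δ r = (qInt q (r + 1) / qInt q (r - 2)) * Δ (r - 1)) ∧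
    (∀ i : ℤ, 2 ≤ i →
      Δ i = (qInt q (i + 1) * qInt q i * qInt q (i - 1)) / (qInt q 2 * qInt q 3) * Δ 2) := by
  have h1q : (1 : K) - q ≠ 0 := sub_ne_zero.mpr (Ne.symm hq1)
  have hqn : ∀ n : ℤ, n ≠ 0 → (1 : K) - q ^ n ≠ 0 := by
    intro n hn h
    exact hgen n hn (by rw [qInt, h, zero_div])
  have hrec : ∀ r : ℤ, 3 ≤ r → Δ r = (qInt q (r + 1) / qInt q (r - 2)) * Δ (r - 1) := by
    intro r hr
    have h := hcoc 1 (r - 1)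
    have e1 : (1 : ℤ) + (r - 1) = r := by ring
    rw [e1, hΔ1, zero_mul, sub_zero] at h
    have hA : (q ^ (-1 : ℤ) - q ^ (-(r - 1))) * q ^ (r - 1) = q ^ (r - 2) - 1 := by
      rw [sub_mul, ← zpow_add₀ hq0, ← zpow_add₀ hq0,
        show (-1 : ℤ) + (r - 1) = r - 2 by ring,
        show -(r - 1) + (r - 1) = (0 : ℤ) by ring, zpow_zero]
    have hB : (q ^ (2 * 1 : ℤ) - q ^ (-(r - 1))) * q ^ (r - 1) = q ^ (r + 1) - 1 := by
      rw [sub_mul, ← zpow_add₀ hq0, ← zpow_add₀ hq0,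
        show (2 * 1 : ℤ) + (r - 1) = r + 1 by ring,
        show -(r - 1) + (r - 1) = (0 : ℤ) by ring, zpow_zero]
    have key : Δ r * (q ^ (r - 2) - 1) = Δ (r - 1) * (q ^ (r + 1) - 1) := by
      rw [← hA, ← hB, ← mul_assoc, ← mul_assoc, h]
    have hd2 : qInt q (r - 2) ≠ 0 := hgen _ (by omega)
    rw [div_mul_eq_mul_div, eq_div_iff hd2]
    simp only [qInt]
    field_simp
    linear_combination -key
  refine ⟨hrec, fun i hi => Int.le_induction
    (motive := fun k _ => Δ k = (qInt q (k + 1) * qInt q k * qInt q (k - 1)) / (qInt q 2 * qInt q 3) * Δ 2)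
    ?_ (fun n hn ihn => ?_) i hi⟩
  · beta_reduce
    have h1 : qInt q (2 - 1) = 1 := by
      norm_num [qInt]; exact h1q
    rw [show (2:ℤ)+1 = 3 by ring, h1]
    have h2 : qInt q 2 ≠ 0 := hgen _ (by omega)
    have h3 : qInt q 3 ≠ 0 := hgen _ (by omega)
    field_simp
  · beta_reduce
    beta_reduce at ihn
    have hr := hrec (n + 1) (by omega)
    rw [show n + 1 - 1 = n by ring] at hr
    rw [hr, ihn]
    have h1 : qInt q (n - 1) ≠ 0 := hgen _ (by omega)
    have h2 : qInt q 2 ≠ 0 := hgen _ (by omega)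
    have h3 : qInt q 3 ≠ 0 := hgen _ (by omega)
    have hD : qInt q 2 * qInt q 3 ≠ 0 := mul_ne_zero h2 h3
    rw [show n + 1 + 1 = n + 2 by ring, show n + 1 - 2 = n - 1 by ring]
    have hcoef : qInt q (n + 2) / qInt q (n - 1)
        * (qInt q (n + 1) * qInt q n * qInt q (n - 1) / (qInt q 2 * qInt q 3))
        = qInt q (n + 2) * qInt q (n + 1) * qInt q n / (qInt q 2 * qInt q 3) := by
      rw [div_mul_div_comm, div_eq_div_iff (mul_ne_zero h1 hD) hD]
      ring
    rw [← mul_assoc, hcoef, show n + 1 - 1 = n by ring]
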